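/- Define δ(u) = (1−u⁶)^{1/6}, I(u) = ∫₀^u t δ(t)^{−5} dt and ψ implicitly by ψ(I(u)) = u²/δ(u)² for u ∈ (0,1) (this is the T₂,₃ model with a=2, b=3, s=1, h=6, a₀=t₀=2). Then as z → ρ⁻ with ρ = I(1), one has ψ(z) = (ρ−z)^{−2} − (1/7)(ρ−z)⁴ + O((ρ−z)^{10}). -/

import Mathlib

set_option maxHeartbeats 1000000
open Real MeasureTheory intervalIntegral Filter Set Topology Asymptotics


lemma cbrt_cube {a : ℝ} (ha : 0 ≤ a) : ((a ^ ((1:ℝ)/3)) : ℝ) ^ (3:ℕ) = a := by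
  rw [← Real.rpow_natCast (a ^ ((1:ℝ)/3)) 3, ← Real.rpow_mul ha]
  norm_num

lemma cbrt_bounds {v : ℝ} (h0 : 0 ≤ v) (h1 : v ≤ 1/64) :
    1 - v/3 - v^2/6 ≤ (1-v) ^ ((1:ℝ)/3) ∧ (1-v) ^ ((1:ℝ)/3) ≤ 1 - v/3 := by
  have hb : (0:ℝ) ≤ 1 - v := by linarith
  have hw : (0:ℝ) ≤ (1-v) ^ ((1:ℝ)/3) := Real.rpow_nonneg hb _
  have hcube : ((1-v) ^ ((1:ℝ)/3)) ^ (3:ℕ) = 1 - v := cbrt_cube hb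
  constructor
  · apply le_of_pow_le_pow_left₀ (n := 3) (by norm_num) hw
    rw [hcube]; nlinarith [sq_nonneg v, sq_nonneg (v*v)]
  · apply le_of_pow_le_pow_left₀ (n := 3) (by norm_num) (by linarith)
    rw [hcube]; nlinarith [sq_nonneg v]

lemma inv23_bounds {v : ℝ} (h0 : 0 ≤ v) (h1 : v ≤ 1/64) :
    1 + (2/3)*v ≤ (1-v) ^ (-(2/3) : ℝ) ∧ (1-v) ^ (-(2/3):ℝ) ≤ 1 + (2/3)*v + v^2 := by
  have hb : (0:ℝ) ≤ 1 - v := by linarith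
  obtain ⟨hw1, hw2⟩ := cbrt_bounds h0 h1
  set w : ℝ := (1-v) ^ ((1:ℝ)/3) with hwdef
  have ha : (0:ℝ) ≤ 1 - v/3 - v^2/6 := by nlinarith
  have hwpos : 0 < w := lt_of_lt_of_le (by nlinarith) hw1
  have hkey : (1-v) ^ (-(2/3):ℝ) = 1 / w^(2:ℕ) := by
    rw [Real.rpow_neg hb, hwdef, ← Real.rpow_natCast ((1-v) ^ ((1:ℝ)/3)) 2,
      ← Real.rpow_mul hb, inv_eq_one_div]
    norm_num
  rw [hkey]
  have hw2pos : (0:ℝ) < w^(2:ℕ) := by positivity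
  have hu := mul_le_mul hw2 hw2 hwpos.le (by linarith : (0:ℝ) ≤ 1 - v/3)
  have hl := mul_le_mul hw1 hw1 ha hwpos.le
  constructor
  · rw [le_div_iff₀ hw2pos]
    nlinarith [hu, sq_nonneg v]
  · rw [div_le_iff₀ hw2pos]
    nlinarith [hl, sq_nonneg v, sq_nonneg (v*v), mul_nonneg (mul_nonneg h0 h0) h0]

lemma quart_aux {s : ℝ} (h0 : 0 ≤ s) (h1 : s ≤ 1/64) : (1+s/10)^4 ≤ 1+s := by
  nlinarith [sq_nonneg s, sq_nonneg (s*s), mul_nonneg h0 h0]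

lemma final_alg {τ x y : ℝ} (ht0 : 0 < τ) (ht1 : τ ≤ 1/2)
    (hx1 : τ + (2/21)*τ^7 ≤ x) (hx2 : x ≤ τ + (2/21)*τ^7 + τ^13/13)
    (hy1 : 1/τ^2 - τ^4/3 - τ^10/6 ≤ y) (hy2 : y ≤ 1/τ^2 - τ^4/3) :
    |y - 1/x^2 + (1/7)*x^4| ≤ 10 * x^10 := by
  have h6 : τ^6 ≤ 1/64 := by
    calc τ^6 ≤ (1/2:ℝ)^6 := pow_le_pow_left₀ ht0.le ht1 6
    _ = 1/64 := by norm_num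
  have htx : τ ≤ x := by nlinarith [pow_pos ht0 7]
  have hx0 : 0 < x := lt_of_lt_of_le ht0 htx
  have ht2 : (0:ℝ) < τ^2 := by positivity
  have ht3 : (0:ℝ) < τ^3 := by positivity
  have ht4 : (0:ℝ) < τ^4 := by positivity
  have hx2p : (0:ℝ) < x^2 := by positivity
  have hxb : x ≤ τ + τ^7/10 := by nlinarith [pow_pos ht0 7, pow_pos ht0 13]
  -- F1 : lower bound on 1/x^2
  have step1 : 1/τ^2 - (4/21)*τ^4 - (2/13)*τ^10 ≤ (3*τ - 2*x)/τ^3 := by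
    rw [le_div_iff₀ ht3]
    have expand : (1/τ^2 - (4/21)*τ^4 - (2/13)*τ^10)*τ^3
        = τ - (4/21)*τ^7 - (2/13)*τ^13 := by field_simp
    rw [expand]; linarith
  have step2 : (3*τ - 2*x)/τ^3 ≤ 1/x^2 := by
    rw [div_le_div_iff₀ ht3 hx2p]
    nlinarith [sq_nonneg (x - τ), hx0, ht0, htx]
  have F1 : 1/τ^2 - (4/21)*τ^4 - (2/13)*τ^10 ≤ 1/x^2 := step1.trans step2
  -- F2 : upper bound on 1/x^2
  have step3 : 1/x^2 ≤ (τ^2 - 2*(x-τ)*τ + 4*(x-τ)^2)/τ^4 := by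
    rw [div_le_div_iff₀ hx2p ht4]
    nlinarith [sq_nonneg (x-τ), sq_nonneg ((x-τ)*(x-τ)), ht0.le, htx,
      mul_nonneg (mul_nonneg (sub_nonneg.2 htx) (sub_nonneg.2 htx)) (sub_nonneg.2 htx)]
  have step4 : (τ^2 - 2*(x-τ)*τ + 4*(x-τ)^2)/τ^4 ≤ 1/τ^2 - (4/21)*τ^4 + (1/25)*τ^10 := by
    rw [div_le_iff₀ ht4]
    have expand : (1/τ^2 - (4/21)*τ^4 + (1/25)*τ^10)*τ^4
        = τ^2 - (4/21)*τ^8 + (1/25)*τ^14 := by field_simp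
    rw [expand]
    have he1 : (2/21)*τ^7 ≤ x - τ := by linarith
    have he2 : x - τ ≤ τ^7/10 := by linarith
    have he0 : (0:ℝ) ≤ x - τ := by linarith
    have q1 : (x-τ)*(x-τ) ≤ (τ^7/10)*(τ^7/10) := mul_le_mul he2 he2 he0 (by positivity)
    have q2 : ((2/21)*τ^7)*τ ≤ (x-τ)*τ := mul_le_mul_of_nonneg_right he1 ht0.le
    linarith [q1, q2]
  have F2 : 1/x^2 ≤ 1/τ^2 - (4/21)*τ^4 + (1/25)*τ^10 := step3.trans step4
  -- F3 : bounds on x^4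
  have F3a : τ^4 ≤ x^4 := pow_le_pow_left₀ ht0.le htx 4
  have F3b : x^4 ≤ τ^4 + τ^10 := by
    have h1 : x^4 ≤ (τ + τ^7/10)^4 := pow_le_pow_left₀ hx0.le hxb 4
    have key : (1 + τ^6/10)^4 ≤ 1 + τ^6 := quart_aux (pow_nonneg ht0.le 6) h6
    have h2 : (τ + τ^7/10)^4 = τ^4 * (1+τ^6/10)^4 := by ring
    have h3 : τ^4 * (1+τ^6/10)^4 ≤ τ^4 * (1+τ^6) := mul_le_mul_of_nonneg_left key ht4.le
    have h4 : τ^4 * (1+τ^6) = τ^4 + τ^10 := by ring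
    linarith
  -- conclude
  have hx10 : τ^10 ≤ x^10 := pow_le_pow_left₀ ht0.le htx 10
  rw [abs_le]
  constructor
  · linarith [F2, hy1, F3a, hx10]
  · linarith [F1, hy2, F3b, hx10]

lemma h_contAt {σ : ℝ} (h : σ^6 ≠ 1) :
    ContinuousAt (fun σ : ℝ => (1 - σ^6) ^ (-(2/3) : ℝ)) σ := by
  apply ContinuousAt.rpow_const
  · exact (continuous_const.sub ((continuous_id.pow 6))).continuousAt
  · exact Or.inl (by simpa [sub_eq_zero] using fun hh => h hh.symm)

lemma poly_deriv1 (x : ℝ) :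
    HasDerivAt (fun σ : ℝ => σ + (2/21)*σ^7) (1 + (2/3)*x^6) x := by
  have h1 := (hasDerivAt_pow 7 x).const_mul (2/21 : ℝ)
  have h2 := (hasDerivAt_id x).add h1
  refine h2.congr_deriv ?_
  push_cast; ring

lemma poly_deriv2 (x : ℝ) :
    HasDerivAt (fun σ : ℝ => σ + (2/21)*σ^7 + σ^13/13) (1 + (2/3)*x^6 + x^12) x := by
  have h1 := ((hasDerivAt_pow 13 x).div_const (13 : ℝ))
  have h2 := (poly_deriv1 x).add h1
  refine h2.congr_deriv ?_
  push_cast; ring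

lemma X_bounds {τ : ℝ} (ht0 : 0 < τ) (ht1 : τ ≤ 1/2) :
    τ + (2/21)*τ^7 ≤ (∫ σ in (0:ℝ)..τ, (1 - σ^6) ^ (-(2/3):ℝ)) ∧
    (∫ σ in (0:ℝ)..τ, (1 - σ^6) ^ (-(2/3):ℝ)) ≤ τ + (2/21)*τ^7 + τ^13/13 := by
  have hmem : ∀ σ ∈ Set.Icc (0:ℝ) τ, 0 ≤ σ^6 ∧ σ^6 ≤ 1/64 := by
    intro σ hσ
    constructor
    · positivity
    · calc σ^6 ≤ (1/2:ℝ)^6 := by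
            apply pow_le_pow_left₀ hσ.1 (hσ.2.trans ht1)
      _ ≤ 1/64 := by norm_num
  have hInt : IntervalIntegrable (fun σ : ℝ => (1 - σ^6) ^ (-(2/3):ℝ)) volume 0 τ := by
    apply ContinuousOn.intervalIntegrable
    intro σ hσ
    rw [Set.uIcc_of_le ht0.le] at hσ
    exact (h_contAt (by obtain ⟨h1, h2⟩ := hmem σ hσ; intro h; rw [h] at h2; norm_num at h2)).continuousWithinAt
  have hI1 : (∫ σ in (0:ℝ)..τ, (1 + (2/3)*σ^6)) = τ + (2/21)*τ^7 := by
    rw [integral_eq_sub_of_hasDerivAt (fun x _ => poly_deriv1 x)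
      (Continuous.intervalIntegrable (by continuity) _ _)]
    ring
  have hI2 : (∫ σ in (0:ℝ)..τ, (1 + (2/3)*σ^6 + σ^12)) = τ + (2/21)*τ^7 + τ^13/13 := by
    rw [integral_eq_sub_of_hasDerivAt (fun x _ => poly_deriv2 x)
      (Continuous.intervalIntegrable (by continuity) _ _)]
    ring
  constructor
  · rw [← hI1]
    apply integral_mono_on ht0.le (Continuous.intervalIntegrable (by continuity) _ _) hInt
    intro σ hσ
    obtain ⟨h1, h2⟩ := hmem σ hσ
    simpa using (inv23_bounds h1 h2).1
  · rw [← hI2]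
    apply integral_mono_on ht0.le hInt (Continuous.intervalIntegrable (by continuity) _ _)
    intro σ hσ
    obtain ⟨h1, h2⟩ := hmem σ hσ
    have := (inv23_bounds h1 h2).2
    calc (1 - σ^6) ^ (-(2/3):ℝ) ≤ 1 + (2/3)*σ^6 + (σ^6)^2 := this
    _ = 1 + (2/3)*σ^6 + σ^12 := by ring

lemma g_integrable : IntervalIntegrable (fun t : ℝ => t * (1 - t^6) ^ (-(5/6):ℝ)) volume 0 1 := by
  have hmaj : IntervalIntegrable (fun t : ℝ => (1 - t) ^ (-(5/6):ℝ)) volume 0 1 := by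
    have h := (intervalIntegrable_rpow' (a := 0) (b := 1) (r := -(5/6)) (by norm_num)).comp_sub_left 1
    norm_num at h
    exact h.symm
  apply hmaj.mono_fun
  · exact (by fun_prop : Measurable (fun t : ℝ => t * (1 - t^6) ^ (-(5/6):ℝ))).aestronglyMeasurable
  · rw [Filter.EventuallyLE, ae_restrict_iff' measurableSet_uIoc]
    apply Filter.Eventually.of_forall
    intro t ht
    rw [Set.uIoc_of_le (by norm_num : (0:ℝ) ≤ 1)] at ht
    obtain ⟨ht0, ht1⟩ := ht
    rcases eq_or_lt_of_le ht1 with h1 | h1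
    · subst h1
      norm_num [Real.zero_rpow (by norm_num : (-(5/6):ℝ) ≠ 0)]
    · have hb : 0 < 1 - t := by linarith
      have hb6 : 1 - t ≤ 1 - t^6 := by nlinarith [pow_le_one₀ ht0.le ht1 (n := 6), pow_le_one₀ ht0.le ht1 (n := 5), pow_nonneg ht0.le 5]
      have key : (1 - t^6) ^ (-(5/6):ℝ) ≤ (1 - t) ^ (-(5/6):ℝ) :=
        Real.rpow_le_rpow_of_nonpos hb hb6 (by norm_num)
      have h1t6 : (0:ℝ) ≤ 1 - t^6 := by nlinarith [pow_le_one₀ ht0.le ht1 (n := 6), pow_le_one₀ ht0.le ht1 (n := 5)]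
      have hg0 : (0:ℝ) ≤ (1 - t^6) ^ (-(5/6):ℝ) := Real.rpow_nonneg h1t6 _
      rw [Real.norm_eq_abs, Real.norm_eq_abs, abs_of_nonneg (mul_nonneg ht0.le hg0),
        abs_of_nonneg (Real.rpow_nonneg hb.le _)]
      calc t * (1 - t^6) ^ (-(5/6):ℝ) ≤ 1 * (1 - t^6) ^ (-(5/6):ℝ) := by
            apply mul_le_mul_of_nonneg_right ht1 hg0
      _ = (1 - t^6) ^ (-(5/6):ℝ) := by ring
      _ ≤ (1 - t) ^ (-(5/6):ℝ) := key

example : True := trivial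

lemma six_pow {a : ℝ} (ha : 0 ≤ a) : (a ^ ((1:ℝ)/6)) ^ (6:ℕ) = a := by
  rw [← Real.rpow_natCast (a ^ ((1:ℝ)/6)) 6, ← Real.rpow_mul ha]
  norm_num

lemma subst_compact {u c : ℝ} (hu : 0 < u) (huc : u ≤ c) (hc : c < 1) :
    ∫ t in u..c, t * (1 - t^6) ^ (-(5/6):ℝ)
      = ∫ σ in ((1 - c^6) ^ ((1:ℝ)/6))..((1 - u^6) ^ ((1:ℝ)/6)), (1 - σ^6) ^ (-(2/3):ℝ) := by
  have huIcc : Set.uIcc u c = Set.Icc u c := Set.uIcc_of_le huc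
  have hmem : ∀ x ∈ Set.Icc u c, 0 < x ∧ x < 1 := fun x hx =>
    ⟨lt_of_lt_of_le hu hx.1, lt_of_le_of_lt hx.2 hc⟩
  have hx6 : ∀ x ∈ Set.Icc u c, 0 < 1 - x^6 := by
    intro x hx
    obtain ⟨h0, h1⟩ := hmem x hx
    have := pow_lt_one₀ h0.le h1 (n := 6) (by norm_num)
    linarith
  have key := intervalIntegral.integral_comp_smul_deriv'
    (f := fun t : ℝ => (1 - t^6) ^ ((1:ℝ)/6))
    (f' := fun t : ℝ => -(t^5 * (1 - t^6) ^ (-(5/6):ℝ)))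
    (g := fun σ : ℝ => (1 - σ^6) ^ (-(2/3):ℝ))
    (a := u) (b := c) ?hf ?hf' ?hg
  case hf =>
    intro x hx
    rw [huIcc] at hx
    have h6 := hx6 x hx
    have hp : HasDerivAt (fun t : ℝ => 1 - t^6) (-(6*x^5)) x := by
      simpa using ((hasDerivAt_pow 6 x).const_sub 1)
    have hr := (Real.hasDerivAt_rpow_const (x := 1 - x^6) (p := (1:ℝ)/6) (Or.inl h6.ne')).comp x hp
    refine hr.congr_deriv ?_
    rw [show (1:ℝ)/6 - 1 = -(5/6) by norm_num]
    ring
  case hf' =>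
    intro x hx
    rw [huIcc] at hx
    have h6 := hx6 x hx
    exact ((((continuous_pow 5).continuousAt).mul (ContinuousAt.rpow_const
      (continuousAt_const.sub ((continuous_pow 6).continuousAt)) (Or.inl h6.ne'))).neg).continuousWithinAt
  case hg =>
    intro σ hσ
    obtain ⟨x, hx, rfl⟩ := hσ
    rw [huIcc] at hx
    have h6 := hx6 x hx
    have hσ6 : ((1 - x^6) ^ ((1:ℝ)/6)) ^ (6:ℕ) = 1 - x^6 := six_pow h6.le
    have hxp : 0 < x^6 := pow_pos (hmem x hx).1 6
    have hne : ((1 - x^6) ^ ((1:ℝ)/6)) ^ (6:ℕ) ≠ 1 := by rw [hσ6]; intro h; nlinarith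
    exact (h_contAt hne).continuousWithinAt
  -- now use key
  have hpt : ∀ x ∈ Set.uIcc u c,
      -(x^5 * (1 - x^6) ^ (-(5/6):ℝ)) • (fun σ : ℝ => (1 - σ^6) ^ (-(2/3):ℝ)) ((1 - x^6) ^ ((1:ℝ)/6))
        = -(x * (1 - x^6) ^ (-(5/6):ℝ)) := by
    intro x hx
    rw [huIcc] at hx
    obtain ⟨hx0, hx1⟩ := hmem x hx
    have h6 := hx6 x hx
    have hσ6 : ((1 - x^6) ^ ((1:ℝ)/6)) ^ (6:ℕ) = 1 - x^6 := six_pow h6.le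
    have hval : (fun σ : ℝ => (1 - σ^6) ^ (-(2/3):ℝ)) ((1 - x^6) ^ ((1:ℝ)/6)) = (x^(4:ℕ))⁻¹ := by
      show (1 - ((1 - x^6) ^ ((1:ℝ)/6))^(6:ℕ)) ^ (-(2/3):ℝ) = (x^(4:ℕ))⁻¹
      rw [hσ6, show (1:ℝ) - (1 - x^6) = x^6 by ring, ← Real.rpow_natCast x 6,
        ← Real.rpow_mul hx0.le, show ((6:ℕ):ℝ) * (-(2/3)) = -(4:ℕ) by norm_num,
        Real.rpow_neg hx0.le, Real.rpow_natCast]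
    rw [hval, smul_eq_mul]
    have : x^5 = x * x^4 := by ring
    field_simp
  have lhs_eq : (∫ x in u..c, -(x^5 * (1 - x^6) ^ (-(5/6):ℝ)) • ((fun σ : ℝ => (1 - σ^6) ^ (-(2/3):ℝ)) ∘ (fun t : ℝ => (1 - t^6) ^ ((1:ℝ)/6))) x)
      = ∫ x in u..c, -(x * (1 - x^6) ^ (-(5/6):ℝ)) := by
    apply intervalIntegral.integral_congr
    intro x hx
    simpa using hpt x hx
  rw [lhs_eq] at key
  rw [intervalIntegral.integral_neg] at key
  rw [show (∫ σ in ((1 - c^6) ^ ((1:ℝ)/6))..((1 - u^6) ^ ((1:ℝ)/6)), (1-σ^6) ^ (-(2/3):ℝ))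
      = -(∫ σ in ((1 - u^6) ^ ((1:ℝ)/6))..((1 - c^6) ^ ((1:ℝ)/6)), (1-σ^6) ^ (-(2/3):ℝ)) from
    intervalIntegral.integral_symm _ _]
  linarith [key]

lemma subst_limit {u : ℝ} (hu0 : 0 < u) (hu1 : u < 1) :
    (∫ t in u..(1:ℝ), t * (1 - t^6) ^ (-(5/6):ℝ))
      = ∫ σ in (0:ℝ)..((1 - u^6) ^ ((1:ℝ)/6)), (1 - σ^6) ^ (-(2/3):ℝ) := by
  set g : ℝ → ℝ := fun t => t * (1 - t^6) ^ (-(5/6):ℝ) with hg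
  set h : ℝ → ℝ := fun σ => (1 - σ^6) ^ (-(2/3):ℝ) with hh
  set τ : ℝ → ℝ := fun c => (1 - c^6) ^ ((1:ℝ)/6) with hτ
  have hu6 : 0 < 1 - u^6 := by
    have := pow_lt_one₀ hu0.le hu1 (n := 6) (by norm_num); linarith
  have hτu0 : 0 < τ u := Real.rpow_pos_of_pos hu6 _
  have hτu1 : τ u < 1 := by
    have : τ u ≤ 1 := by
      rw [hτ]
      calc (1 - u^6) ^ ((1:ℝ)/6) ≤ 1 ^ ((1:ℝ)/6) :=
        Real.rpow_le_rpow hu6.le (by nlinarith [pow_pos hu0 6]) (by norm_num)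
      _ = 1 := Real.one_rpow _
    rcases lt_or_eq_of_le this with h | h
    · exact h
    · exfalso
      have h6 : (τ u)^(6:ℕ) = 1 - u^6 := six_pow hu6.le
      rw [h] at h6; simp at h6; nlinarith [pow_pos hu0 6]
  have hτmono : ∀ c ∈ Ioo u 1, 0 ≤ τ c ∧ τ c ≤ τ u := by
    intro c hc
    constructor
    · exact Real.rpow_nonneg (by nlinarith [pow_lt_one₀ (le_trans hu0.le hc.1.le) hc.2 (by norm_num : (6:ℕ) ≠ 0)]) _
    · apply Real.rpow_le_rpow (by nlinarith [pow_lt_one₀ (le_trans hu0.le hc.1.le) hc.2 (by norm_num : (6:ℕ) ≠ 0)])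
        (by nlinarith [pow_le_pow_left₀ hu0.le hc.1.le 6]) (by norm_num)
  -- continuity of h on [0, τ u]
  have hhcont : ∀ x ∈ Set.uIcc (0:ℝ) (τ u), ContinuousWithinAt h (Set.uIcc (0:ℝ) (τ u)) x := by
    intro x hx
    rw [Set.uIcc_of_le hτu0.le] at hx
    have : x^6 ≠ 1 := by
      have h1 : x^6 ≤ (τ u)^6 := pow_le_pow_left₀ hx.1 hx.2 6
      have h2 : (τ u)^6 < 1 := pow_lt_one₀ hτu0.le hτu1 (by norm_num)
      intro h; rw [h] at h1; linarith
    exact (h_contAt this).continuousWithinAt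
  have hhInt : IntervalIntegrable h volume 0 (τ u) :=
    ContinuousOn.intervalIntegrable (fun x hx => hhcont x hx)
  -- T1
  have hgInt : IntervalIntegrable g volume u 1 :=
    g_integrable.mono_set (by rw [Set.uIcc_of_le hu1.le, Set.uIcc_of_le (by norm_num : (0:ℝ) ≤ 1)]; exact Set.Icc_subset_Icc hu0.le le_rfl)
  have T1 : Tendsto (fun c => ∫ t in u..c, g t) (𝓝[<] (1:ℝ)) (𝓝 (∫ t in u..(1:ℝ), g t)) := by
    have cw : ContinuousWithinAt (fun b => ∫ t in u..b, g t) (Set.Icc u 1) 1 := by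
      apply intervalIntegral.continuousWithinAt_primitive (measure_singleton _)
      rw [min_self, max_eq_right hu1.le]
      exact hgInt
    have := cw.tendsto
    rw [← nhdsWithin_Ioo_eq_nhdsLT hu1]
    exact this.mono_left (nhdsWithin_mono _ Set.Ioo_subset_Icc_self)
  -- T2
  have hP : ContinuousWithinAt (fun b => ∫ σ in (0:ℝ)..b, h σ) (Set.Icc 0 (τ u)) 0 := by
    apply intervalIntegral.continuousWithinAt_primitive (measure_singleton _)
    rw [min_self, max_eq_right hτu0.le]
    exact hhInt
  have hτtendsto : Tendsto τ (𝓝[<] (1:ℝ)) (𝓝[Set.Icc 0 (τ u)] 0) := by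
    rw [tendsto_nhdsWithin_iff]
    constructor
    · have hcont : ContinuousAt τ 1 := by
        apply ContinuousAt.rpow_const
        · exact (continuous_const.sub (continuous_pow 6)).continuousAt
        · exact Or.inr (by norm_num)
      have : τ 1 = 0 := by
        rw [hτ]; norm_num
      rw [← this]
      exact hcont.continuousWithinAt.tendsto
    · filter_upwards [Ioo_mem_nhdsLT_of_mem (Set.mem_Ioc.2 ⟨hu1, le_rfl⟩)] with c hc
      exact Set.mem_Icc.2 (hτmono c hc)
  have T2' : Tendsto (fun c => ∫ σ in (0:ℝ)..(τ c), h σ) (𝓝[<] (1:ℝ)) (𝓝 (∫ σ in (0:ℝ)..(0:ℝ), h σ)) := by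
    have := hP.tendsto.comp hτtendsto
    simpa [Function.comp_def] using this
  have T2 : Tendsto (fun c => ∫ σ in (τ c)..(τ u), h σ) (𝓝[<] (1:ℝ)) (𝓝 (∫ σ in (0:ℝ)..(τ u), h σ)) := by
    have heq : ∀ᶠ c in 𝓝[<] (1:ℝ), (∫ σ in (0:ℝ)..(τ u), h σ) - (∫ σ in (0:ℝ)..(τ c), h σ) = ∫ σ in (τ c)..(τ u), h σ := by
      filter_upwards [Ioo_mem_nhdsLT_of_mem (Set.mem_Ioc.2 ⟨hu1, le_rfl⟩)] with c hc
      apply intervalIntegral.integral_interval_sub_left hhInt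
      exact hhInt.mono_set (by rw [Set.uIcc_of_le (hτmono c hc).1, Set.uIcc_of_le hτu0.le]; exact Set.Icc_subset_Icc le_rfl (hτmono c hc).2)
    have base : Tendsto (fun c => (∫ σ in (0:ℝ)..(τ u), h σ) - (∫ σ in (0:ℝ)..(τ c), h σ)) (𝓝[<] (1:ℝ)) (𝓝 ((∫ σ in (0:ℝ)..(τ u), h σ) - 0)) := by
      apply Tendsto.sub tendsto_const_nhds
      simpa using T2'
    rw [sub_zero] at base
    exact base.congr' heq
  -- eventual equality
  have heq : ∀ᶠ c in 𝓝[<] (1:ℝ), (∫ t in u..c, g t) = ∫ σ in (τ c)..(τ u), h σ := by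
    filter_upwards [Ioo_mem_nhdsLT_of_mem (Set.mem_Ioc.2 ⟨hu1, le_rfl⟩)] with c hc
    exact subst_compact hu0 hc.1.le hc.2
  exact tendsto_nhds_unique (T1.congr' heq) T2

/-- For the `T₂,₃` model (`δ(u) = (1-u⁶)^{1/6}`, `I(u) = ∫₀ᵘ t δ(t)⁻⁵ dt`,
`ψ(I(u)) = u²/δ(u)²`), as `z → ρ⁻` where `ρ = I(1)`:
`ψ(z) = (ρ-z)⁻² - (1/7)(ρ-z)⁴ + O((ρ-z)¹⁰)`. -/
theorem urn_T23_singular_expansion (ψ : ℝ → ℝ)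
    (hψ : ∀ u ∈ Set.Ioo (0 : ℝ) 1,
      ψ (∫ t in (0 : ℝ)..u, t * (1 - t ^ 6) ^ (-(5 / 6 : ℝ))) =
        u ^ 2 / ((1 - u ^ 6) ^ ((1 : ℝ) / 6)) ^ 2) :
    (fun z : ℝ =>
        ψ z - 1 / ((∫ t in (0 : ℝ)..1, t * (1 - t ^ 6) ^ (-(5 / 6 : ℝ))) - z) ^ 2 +
          (1 / 7) * ((∫ t in (0 : ℝ)..1, t * (1 - t ^ 6) ^ (-(5 / 6 : ℝ))) - z) ^ 4)
      =O[𝓝[<] (∫ t in (0 : ℝ)..1, t * (1 - t ^ 6) ^ (-(5 / 6 : ℝ)))]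
        (fun z : ℝ =>
          ((∫ t in (0 : ℝ)..1, t * (1 - t ^ 6) ^ (-(5 / 6 : ℝ))) - z) ^ 10) := by
  set g : ℝ → ℝ := fun t => t * (1 - t ^ 6) ^ (-(5 / 6 : ℝ)) with hgdef
  set ρ : ℝ := ∫ t in (0:ℝ)..1, g t with hρdef
  set u₀ : ℝ := (63/64 : ℝ) ^ ((1:ℝ)/6) with hu₀def
  have hu₀pos : 0 < u₀ := Real.rpow_pos_of_pos (by norm_num) _
  have hu₀lt1 : u₀ < 1 :=
    Real.rpow_lt_one (by norm_num) (by norm_num) (by norm_num)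
  have hu₀6 : u₀ ^ (6:ℕ) = 63/64 := six_pow (by norm_num)
  have hhalf : ((1:ℝ)/64) ^ ((1:ℝ)/6) = 1/2 := by
    rw [show (1/64:ℝ) = (1/2)^(6:ℕ) by norm_num, ← Real.rpow_natCast (1/2 : ℝ) 6,
      ← Real.rpow_mul (by norm_num)]
    norm_num
  -- I is continuous on [u₀, 1]
  have hIcont : ContinuousOn (fun b => ∫ t in (0:ℝ)..b, g t) (Set.Icc u₀ 1) := by
    intro b hb
    apply intervalIntegral.continuousWithinAt_primitive (measure_singleton _)
    rw [min_eq_left hu₀pos.le, max_eq_right (by norm_num : (0:ℝ) ≤ 1)]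
    exact g_integrable
  -- ρ - I u = ∫ 0..τ u for u ∈ (0,1)
  have hsub : ∀ u, 0 < u → u < 1 →
      ρ - (∫ t in (0:ℝ)..u, g t) = ∫ σ in (0:ℝ)..((1 - u^6) ^ ((1:ℝ)/6)), (1 - σ^6) ^ (-(2/3):ℝ) := by
    intro u h0 h1
    rw [← subst_limit h0 h1, hρdef]
    apply intervalIntegral.integral_interval_sub_left g_integrable
    exact g_integrable.mono_set (by
      rw [Set.uIcc_of_le h0.le, Set.uIcc_of_le (by norm_num : (0:ℝ) ≤ 1)]
      exact Set.Icc_subset_Icc le_rfl h1.le)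
  -- I u₀ < ρ
  have hu₀6lt : (0:ℝ) < 1 - u₀^6 := by rw [hu₀6]; norm_num
  have hτu₀ : ((1 : ℝ) - u₀^6) ^ ((1:ℝ)/6) = 1/2 := by rw [hu₀6]; norm_num [hhalf]
  have hIu₀ : (∫ t in (0:ℝ)..u₀, g t) < ρ := by
    have h := hsub u₀ hu₀pos hu₀lt1
    rw [hτu₀] at h
    have hb := (X_bounds (by norm_num : (0:ℝ) < 1/2) le_rfl).1
    have : (0:ℝ) < 1/2 + (2/21)*(1/2)^7 := by norm_num
    linarith
  -- main bound
  rw [Asymptotics.isBigO_iff]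
  refine ⟨10, ?_⟩
  filter_upwards [Ioo_mem_nhdsLT_of_mem (Set.mem_Ioc.2 ⟨hIu₀, le_rfl⟩)] with z hz
  obtain ⟨u, huIoo, hIu⟩ := intermediate_value_Ioo hu₀lt1.le hIcont (by exact hz)
  obtain ⟨huu₀, hu1⟩ := huIoo
  have hIu' : (∫ t in (0:ℝ)..u, g t) = z := hIu
  have hu0 : 0 < u := lt_trans hu₀pos huu₀
  set τ : ℝ := (1 - u^6) ^ ((1:ℝ)/6) with hτdef
  have hu6 : (0:ℝ) < 1 - u^6 := by
    have := pow_lt_one₀ hu0.le hu1 (by norm_num : (6:ℕ) ≠ 0); linarith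
  have hτpos : 0 < τ := Real.rpow_pos_of_pos hu6 _
  have hτle : τ ≤ 1/2 := by
    rw [hτdef, ← hhalf]
    apply Real.rpow_le_rpow hu6.le _ (by norm_num)
    have : u₀^6 ≤ u^6 := pow_le_pow_left₀ hu₀pos.le huu₀.le 6
    rw [hu₀6] at this; linarith
  have hτ6 : τ^(6:ℕ) = 1 - u^6 := six_pow hu6.le
  -- x = ρ - z
  have hx : ρ - z = ∫ σ in (0:ℝ)..τ, (1 - σ^6) ^ (-(2/3):ℝ) := by
    rw [← hIu']; exact hsub u hu0 hu1
  obtain ⟨hx1, hx2⟩ := X_bounds hτpos hτle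
  rw [← hx] at hx1 hx2
  -- y = ψ z
  have hy : ψ z = (1 - τ^6) ^ ((1:ℝ)/3) / τ^2 := by
    have := hψ u ⟨hu0, hu1⟩
    rw [hIu'] at this
    rw [this, hτ6]
    congr 1
    · rw [show (1:ℝ) - (1 - u^6) = u^6 by ring, ← Real.rpow_natCast u 6,
        ← Real.rpow_mul hu0.le, show ((6:ℕ):ℝ) * ((1:ℝ)/3) = ((2:ℕ):ℝ) by norm_num,
        Real.rpow_natCast]
  have hv1 : (0:ℝ) ≤ τ^6 := by positivity
  have hv2 : τ^6 ≤ 1/64 := by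
    calc τ^6 ≤ (1/2:ℝ)^6 := pow_le_pow_left₀ hτpos.le hτle 6
    _ = 1/64 := by norm_num
  obtain ⟨hc1, hc2⟩ := cbrt_bounds hv1 hv2
  have hτ2 : (0:ℝ) < τ^2 := by positivity
  have hy1 : 1/τ^2 - τ^4/3 - τ^10/6 ≤ ψ z := by
    rw [hy]
    have hstep : (1 - τ^6/3 - (τ^6)^2/6) / τ^2 ≤ (1 - τ^6) ^ ((1:ℝ)/3) / τ^2 := by
      gcongr
    have hid : (1 - τ^6/3 - (τ^6)^2/6) / τ^2 = 1/τ^2 - τ^4/3 - τ^10/6 := by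
      field_simp
    linarith
  have hy2 : ψ z ≤ 1/τ^2 - τ^4/3 := by
    rw [hy]
    have hstep : (1 - τ^6) ^ ((1:ℝ)/3) / τ^2 ≤ (1 - τ^6/3) / τ^2 := by
      gcongr
    have hid : (1 - τ^6/3) / τ^2 = 1/τ^2 - τ^4/3 := by
      field_simp
    linarith
  have halg := final_alg hτpos hτle hx1 hx2 hy1 hy2
  have hxpos : 0 < ρ - z := by nlinarith [pow_pos hτpos 7, pow_pos hτpos 13]
  rw [Real.norm_eq_abs, Real.norm_eq_abs, abs_of_nonneg (pow_nonneg hxpos.le 10)]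
  exact halg
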